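/- arXiv:1406.5468 — 5 statements merged into one kernel-verified Lean document; each statement's English description precedes it below -/
import Mathlib

section
/- Fix N ≥ 1. Define θ_0 = 1, θ_{i+1} = (1 + sqrt(1 + 4 θ_i^2))/2 for 0 ≤ i ≤ N-2, and θ_N = (1 + sqrt(1 + 8 θ_{N-1}^2))/2. Then 1/θ_N^2 ≤ 2/((N+1)(N+1+sqrt(2))). -/
noncomputable def tseq : ℕ → ℝ
  | 0 => 1
  | i + 1 => (1 + Real.sqrt (1 + 4 * (tseq i) ^ 2)) / 2

noncomputable def θseq (N i : ℕ) : ℝ :=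
  if i < N then tseq i else (1 + Real.sqrt (1 + 8 * (tseq (N - 1)) ^ 2)) / 2

theorem stmt_5 (N : ℕ) (hN : 1 ≤ N) :
    1 / (θseq N N) ^ 2 ≤ 2 / (((N : ℝ) + 1) * ((N : ℝ) + 1 + Real.sqrt 2)) := by
  have tlb : ∀ i : ℕ, ((i : ℝ) + 2) / 2 ≤ tseq i := by
    intro i
    induction i with
    | zero => norm_num [tseq]
    | succ i ih =>
      have hpos : (0 : ℝ) ≤ tseq i := le_trans (by positivity) ih
      have hsq : 2 * tseq i ≤ Real.sqrt (1 + 4 * tseq i ^ 2) := by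
        rw [show (1 : ℝ) + 4 * tseq i ^ 2 = (2 * tseq i) ^ 2 + 1 by ring]
        calc 2 * tseq i = Real.sqrt ((2 * tseq i) ^ 2) := by
              rw [Real.sqrt_sq (by positivity)]
          _ ≤ _ := Real.sqrt_le_sqrt (by nlinarith)
      simp only [tseq]
      push_cast
      linarith
  have hθ : θseq N N = (1 + Real.sqrt (1 + 8 * (tseq (N - 1)) ^ 2)) / 2 := by
    simp [θseq]
  set t := tseq (N - 1) with ht
  have htlb : ((N : ℝ) + 1) / 2 ≤ t := by
    have := tlb (N - 1)
    have hc : ((N - 1 : ℕ) : ℝ) = (N : ℝ) - 1 := by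
      have : (1 : ℕ) ≤ N := hN
      push_cast [Nat.cast_sub this]; ring
    rw [hc] at this
    linarith
  have htpos : (0 : ℝ) < t := lt_of_lt_of_le (by positivity) htlb
  have hs2 : Real.sqrt 2 ≤ 1.5 := by
    rw [show (1.5 : ℝ) = Real.sqrt (1.5 ^ 2) by rw [Real.sqrt_sq]; norm_num]
    exact Real.sqrt_le_sqrt (by norm_num)
  have hs2' : (0 : ℝ) ≤ Real.sqrt 2 := Real.sqrt_nonneg 2
  have hsq : 2 * Real.sqrt 2 * t ≤ Real.sqrt (1 + 8 * t ^ 2) := by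
    calc 2 * Real.sqrt 2 * t = Real.sqrt ((2 * Real.sqrt 2 * t) ^ 2) := by
          rw [Real.sqrt_sq (by positivity)]
      _ ≤ _ := Real.sqrt_le_sqrt (by
          have : Real.sqrt 2 ^ 2 = 2 := Real.sq_sqrt (by norm_num)
          nlinarith)
  have hθlb : (1 + Real.sqrt 2 * ((N : ℝ) + 1)) / 2 ≤ θseq N N := by
    rw [hθ]
    have : Real.sqrt 2 * ((N : ℝ) + 1) ≤ 2 * Real.sqrt 2 * t := by nlinarith
    have := le_trans this hsq
    linarith
  have hθpos : (0 : ℝ) < θseq N N := lt_of_lt_of_le (by positivity) hθlb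
  have hBpos : (0 : ℝ) < ((N : ℝ) + 1) * ((N : ℝ) + 1 + Real.sqrt 2) := by positivity
  rw [div_le_div_iff₀ (by positivity) hBpos]
  have key : ((N : ℝ) + 1) * ((N : ℝ) + 1 + Real.sqrt 2) ≤ 2 * θseq N N ^ 2 := by
    have h1 : ((1 + Real.sqrt 2 * ((N : ℝ) + 1)) / 2) ^ 2 ≤ θseq N N ^ 2 := by
      apply pow_le_pow_left₀ (by positivity) hθlb
    have hs : Real.sqrt 2 ^ 2 = 2 := Real.sq_sqrt (by norm_num)
    nlinarith [sq_nonneg ((N : ℝ) + 1), Nat.cast_nonneg (α := ℝ) N]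
  nlinarith
end

section
/- Let t_0 = 1 and t_{i+1} = (1 + sqrt(1 + 4 t_i^2))/2. Define coefficients h by the FGM1 rule: h_{i+1,k} = ((t_i - 1)/t_{i+1})·h_{i,k} for k ≤ i-2, h_{i+1,i-1} = ((t_i - 1)/t_{i+1})·(h_{i,i-1} - 1), h_{i+1,i} = 1 + (t_i - 1)/t_{i+1}; and define coefficients h' by the FGM2 rule: h'_{i+1,k} = (1/t_{i+1})·(t_k - sum_{j=k+1}^{i} h'_{j,k}) for k ≤ i-1, h'_{i+1,i} = 1 + (t_i - 1)/t_{i+1}. Then h_{i,k} = h'_{i,k} for all 0 ≤ k < i. -/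
lemma tseq_pos : ∀ i, 0 < tseq i := by
  intro i
  cases i with
  | zero => norm_num [tseq]
  | succ n =>
    have := Real.sqrt_nonneg (1 + 4 * (tseq n) ^ 2)
    simp only [tseq]
    linarith

/-- The coefficients `h` of FGM1 and `h'` of FGM2 coincide for all `0 ≤ k < i`. -/
theorem stmt_6 (h h' : ℕ → ℕ → ℝ)
    -- FGM1 rule
    (hF1a : ∀ i k, k + 2 ≤ i →
      h (i + 1) k = ((tseq i - 1) / tseq (i + 1)) * h i k)
    (hF1b : ∀ i, h (i + 2) i = ((tseq (i + 1) - 1) / tseq (i + 2)) * (h (i + 1) i - 1))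
    (hF1c : ∀ i, h (i + 1) i = 1 + (tseq i - 1) / tseq (i + 1))
    -- FGM2 rule
    (hF2a : ∀ i k, k < i →
      h' (i + 1) k = (1 / tseq (i + 1)) * (tseq k - ∑ j ∈ Finset.Ico (k + 1) (i + 1), h' j k))
    (hF2b : ∀ i, h' (i + 1) i = 1 + (tseq i - 1) / tseq (i + 1)) :
    ∀ i k, k < i → h i k = h' i k := by
  -- key invariant
  have key : ∀ k i, k + 1 ≤ i →
      tseq k - ∑ j ∈ Finset.Ico (k + 1) (i + 1), h j k = tseq (i + 1) * h (i + 1) k := by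
    intro k i hi
    induction i, hi using Nat.le_induction with
    | base =>
      rw [Finset.sum_Ico_eq_sum_range]
      simp only [Nat.add_sub_cancel_left, Finset.sum_range_one]
      rw [hF1b k, hF1c k]
      have hp := (tseq_pos (k + 1)).ne'
      have hq := (tseq_pos (k + 2)).ne'
      field_simp
      ring
    | succ i hi ih =>
      rw [Finset.sum_Ico_succ_top (by omega)]
      have ha := hF1a (i + 1) k (by omega)
      have hp := (tseq_pos (i + 2)).ne'
      rw [ha]
      field_simp
      linarith [ih]
  intro i
  induction i using Nat.strong_induction_on with
  | _ i ih =>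
    intro k hk
    match i, hk with
    | i + 1, hk =>
      rcases Nat.lt_or_ge k i with hki | hki
      · -- k < i, so i ≥ k+1
        rw [hF2a i k hki]
        have hsum : ∑ j ∈ Finset.Ico (k + 1) (i + 1), h' j k
            = ∑ j ∈ Finset.Ico (k + 1) (i + 1), h j k := by
          apply Finset.sum_congr rfl
          intro j hj
          simp only [Finset.mem_Ico] at hj
          exact (ih j (by omega) k (by omega)).symm
        rw [hsum, key k i (by omega)]
        have hp := (tseq_pos (i + 1)).ne'
        field_simp
      · have : k = i := by omega
        subst this
        rw [hF1c, hF2b]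
end

section
/- Fix N ≥ 1 and let θ_0, ..., θ_N be the OGM step-size sequence. Define coefficients h by: h_{i+1,k} = (1/θ_{i+1})·(2θ_k - sum_{j=k+1}^{i} h_{j,k}) for k = 0,...,i-1, and h_{i+1,i} = 1 + (2θ_i - 1)/θ_{i+1}. Then these coefficients satisfy the recursion h_{i+1,k} = ((θ_i - 1)/θ_{i+1})·h_{i,k} for k ≤ i-2, h_{i+1,i-1} = ((θ_i - 1)/θ_{i+1})·(h_{i,i-1} - 1), and h_{i+1,i} = 1 + (2θ_i - 1)/θ_{i+1}. -/
lemma tseq_ge_one (i : ℕ) : 1 ≤ tseq i := by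
  induction i with
  | zero => simp [tseq]
  | succ n ih =>
    have h1 : (1:ℝ) ≤ Real.sqrt (1 + 4 * (tseq n) ^ 2) := by
      nlinarith [Real.sq_sqrt (show (0:ℝ) ≤ 1 + 4 * (tseq n) ^ 2 by positivity),
        Real.sqrt_nonneg (1 + 4 * (tseq n) ^ 2), sq_nonneg (tseq n)]
    simp only [tseq]
    linarith

lemma θseq_pos (N i : ℕ) : 0 < θseq N i := by
  unfold θseq
  split
  · linarith [tseq_ge_one i]
  · have := Real.sqrt_nonneg (1 + 8 * (tseq (N - 1)) ^ 2)
    linarith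

/-- The OGM coefficients defined by the OGM2-type rule satisfy the OGM1-type recursion. -/
theorem stmt_7 (N : ℕ) (hN : 1 ≤ N) (h : ℕ → ℕ → ℝ)
    (hO2a : ∀ i k, k < i → i + 1 ≤ N →
      h (i + 1) k = (1 / θseq N (i + 1)) *
        (2 * θseq N k - ∑ j ∈ Finset.Ico (k + 1) (i + 1), h j k))
    (hO2b : ∀ i, i + 1 ≤ N → h (i + 1) i = 1 + (2 * θseq N i - 1) / θseq N (i + 1)) :
    (∀ i k, k + 2 ≤ i → i + 1 ≤ N →
      h (i + 1) k = ((θseq N i - 1) / θseq N (i + 1)) * h i k) ∧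
    (∀ i, i + 2 ≤ N →
      h (i + 2) i = ((θseq N (i + 1) - 1) / θseq N (i + 2)) * (h (i + 1) i - 1)) ∧
    (∀ i, i + 1 ≤ N → h (i + 1) i = 1 + (2 * θseq N i - 1) / θseq N (i + 1)) := by
  refine ⟨?_, ?_, fun i hi => hO2b i hi⟩
  · intro i k hki hiN
    obtain ⟨m, rfl⟩ : ∃ m, i = m + 1 := ⟨i - 1, by omega⟩
    have hkm : k < m := by omega
    have hmN : m + 1 ≤ N := by omega
    have e1 := hO2a (m + 1) k (by omega) hiN
    have e2 := hO2a m k hkm hmN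
    have hsum : ∑ j ∈ Finset.Ico (k + 1) (m + 2), h j k
        = (∑ j ∈ Finset.Ico (k + 1) (m + 1), h j k) + h (m + 1) k := by
      rw [show m + 2 = (m + 1) + 1 from rfl, Finset.sum_Ico_succ_top (by omega)]
    have p1 := (θseq_pos N (m + 1)).ne'
    have p2 := (θseq_pos N (m + 2)).ne'
    rw [hsum] at e1
    rw [e1, e2]
    field_simp
    ring
  · intro i hiN
    have e1 := hO2a (i + 1) i (by omega) hiN
    have hsum : ∑ j ∈ Finset.Ico (i + 1) (i + 2), h j i = h (i + 1) i := by
      rw [show i + 2 = (i + 1) + 1 from rfl, Finset.sum_Ico_succ_top (by omega)]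
      simp
    have e2 := hO2b i (by omega)
    have p1 := (θseq_pos N (i + 1)).ne'
    have p2 := (θseq_pos N (i + 2)).ne'
    rw [hsum, e2] at e1
    rw [e1, e2]
    field_simp
    ring
end

section
/- Let f : R^d → R be convex and continuously differentiable with L-Lipschitz gradient, and let x_* minimize f. Let x_0, x_1, ... be generated by Nesterov's FGM1: y_{i+1} = x_i - (1/L) f'(x_i), t_{i+1} = (1+sqrt(1+4t_i^2))/2 with t_0 = 1, x_{i+1} = y_{i+1} + ((t_i - 1)/t_{i+1})(y_{i+1} - y_i). Then for every n ≥ 1, f(x_n) - f(x_*) ≤ L ||x_0 - x_*||^2 / (2 t_n^2) ≤ 2 L ||x_0 - x_*||^2 / (n+2)^2. -/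
local notation "⟪" x ", " y "⟫" => @inner ℝ _ _ x y

lemma tseq_succ (n : ℕ) : tseq (n + 1) = (1 + Real.sqrt (1 + 4 * (tseq n) ^ 2)) / 2 := by
  rfl

lemma tseq_ge_one_s15 : ∀ n, 1 ≤ tseq n
  | 0 => le_refl 1
  | n + 1 => by
    have h4 : (0:ℝ) ≤ 1 + 4 * tseq n ^ 2 := by positivity
    have hs := Real.sq_sqrt h4
    have hs0 := Real.sqrt_nonneg (1 + 4 * tseq n ^ 2)
    have h1 : (1:ℝ) ≤ Real.sqrt (1 + 4 * tseq n ^ 2) := by nlinarith [sq_nonneg (tseq n)]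
    rw [tseq_succ]; linarith

lemma tseq_pos_s15 (n : ℕ) : 0 < tseq n := lt_of_lt_of_le one_pos (tseq_ge_one_s15 n)

lemma tseq_sq (n : ℕ) : tseq (n + 1) ^ 2 = tseq n ^ 2 + tseq (n + 1) := by
  have h4 : (0:ℝ) ≤ 1 + 4 * tseq n ^ 2 := by positivity
  have hs := Real.sq_sqrt h4
  rw [tseq_succ]
  nlinarith [hs]

lemma tseq_lb : ∀ n : ℕ, ((n : ℝ) + 2) / 2 ≤ tseq n
  | 0 => by norm_num [tseq]
  | n + 1 => by
    have ih := tseq_lb n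
    have h4 : (0:ℝ) ≤ 1 + 4 * tseq n ^ 2 := by positivity
    have hs := Real.sq_sqrt h4
    have hs0 := Real.sqrt_nonneg (1 + 4 * tseq n ^ 2)
    have ht0 := tseq_pos_s15 n
    have h2 : 2 * tseq n ≤ Real.sqrt (1 + 4 * tseq n ^ 2) := by nlinarith
    rw [tseq_succ]
    push_cast
    linarith

section helpers

variable {F : Type*} [NormedAddCommGroup F] [InnerProductSpace ℝ F] [CompleteSpace F]
variable {f : F → ℝ} {f' : F → F} {L : ℝ}

lemma line_hasDerivAt (hgrad : ∀ x, HasGradientAt f (f' x) x) (a v : F) (s : ℝ) :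
    HasDerivAt (fun s : ℝ => f (s • v + a)) ⟪f' (s • v + a), v⟫ s := by
  have hc : HasDerivAt (fun s : ℝ => s • v + a) v s := by
    simpa using ((hasDerivAt_id s).smul_const v).add_const a
  have hf : HasFDerivAt f (InnerProductSpace.toDual ℝ F (f' (s • v + a))) (s • v + a) :=
    hasGradientAt_iff_hasFDerivAt.mp (hgrad _)
  have h := hf.comp_hasDerivAt s hc
  simpa [Function.comp_def, InnerProductSpace.toDual_apply_apply] using h

lemma grad_ineq (hconv : ConvexOn ℝ Set.univ f) (hgrad : ∀ x, HasGradientAt f (f' x) x)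
    (a b : F) : f a + ⟪f' a, b - a⟫ ≤ f b := by
  have hφ : ConvexOn ℝ Set.univ (f ∘ (AffineMap.lineMap a b : ℝ →ᵃ[ℝ] F)) := by
    have := hconv.comp_affineMap (AffineMap.lineMap a b : ℝ →ᵃ[ℝ] F)
    simpa using this
  have hd : HasDerivAt (f ∘ (AffineMap.lineMap a b : ℝ →ᵃ[ℝ] F)) ⟪f' a, b - a⟫ 0 := by
    have h := line_hasDerivAt hgrad a (b - a) 0
    have : (f ∘ (AffineMap.lineMap a b : ℝ →ᵃ[ℝ] F)) = fun s : ℝ => f (s • (b - a) + a) := by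
      funext s
      simp [AffineMap.lineMap_apply]
    rw [this]
    simpa using h
  have hslope := hφ.le_slope_of_hasDerivAt (Set.mem_univ (0:ℝ)) (Set.mem_univ (1:ℝ))
    one_pos hd
  have h0 : (f ∘ (AffineMap.lineMap a b : ℝ →ᵃ[ℝ] F)) 0 = f a := by
    simp [AffineMap.lineMap_apply]
  have h1 : (f ∘ (AffineMap.lineMap a b : ℝ →ᵃ[ℝ] F)) 1 = f b := by
    simp [AffineMap.lineMap_apply]
  rw [slope_def_field] at hslope
  rw [h0, h1] at hslope
  simp at hslope
  linarith

lemma descent (hgrad : ∀ x, HasGradientAt f (f' x) x)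
    (hlip : ∀ x y, ‖f' x - f' y‖ ≤ L * ‖x - y‖) (hL : 0 < L) (a b : F) :
    f b ≤ f a + ⟪f' a, b - a⟫ + L / 2 * ‖b - a‖ ^ 2 := by
  set v := b - a with hv
  set χ : ℝ → ℝ := fun s => f (s • v + a) - s * ⟪f' a, v⟫ - s ^ 2 * (L / 2 * ‖v‖ ^ 2) with hχ
  have hd : ∀ s : ℝ, HasDerivAt χ
      (⟪f' (s • v + a), v⟫ - ⟪f' a, v⟫ - 2 * s * (L / 2 * ‖v‖ ^ 2)) s := by
    intro s
    have h1 := line_hasDerivAt hgrad a v s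
    have h2 : HasDerivAt (fun s : ℝ => s * ⟪f' a, v⟫) ⟪f' a, v⟫ s := by
      simpa using (hasDerivAt_id s).mul_const ⟪f' a, v⟫
    have h3 : HasDerivAt (fun s : ℝ => s ^ 2 * (L / 2 * ‖v‖ ^ 2))
        (2 * s * (L / 2 * ‖v‖ ^ 2)) s := by
      simpa using (hasDerivAt_pow 2 s).mul_const (L / 2 * ‖v‖ ^ 2)
    exact (h1.sub h2).sub h3
  have hanti : AntitoneOn χ (Set.Icc (0:ℝ) 1) := by
    apply antitoneOn_of_deriv_nonpos (convex_Icc 0 1)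
    · exact Continuous.continuousOn (by
        have : ∀ s : ℝ, DifferentiableAt ℝ χ s := fun s => (hd s).differentiableAt
        exact (Differentiable.continuous this))
    · intro s _
      exact (hd s).differentiableAt.differentiableWithinAt
    · intro s hs
      rw [interior_Icc] at hs
      rw [(hd s).deriv]
      have hcs : ⟪f' (s • v + a) - f' a, v⟫ ≤ ‖f' (s • v + a) - f' a‖ * ‖v‖ :=
        real_inner_le_norm _ _
      have hl : ‖f' (s • v + a) - f' a‖ ≤ L * (s * ‖v‖) := by
        have := hlip (s • v + a) a
        simpa [norm_smul, abs_of_pos hs.1] using this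
      have hn : (0:ℝ) ≤ ‖v‖ := norm_nonneg _
      have : ⟪f' (s • v + a), v⟫ - ⟪f' a, v⟫ ≤ L * s * ‖v‖ ^ 2 := by
        have e : ⟪f' (s • v + a), v⟫ - ⟪f' a, v⟫ = ⟪f' (s • v + a) - f' a, v⟫ := by
          rw [inner_sub_left]
        rw [e]
        calc ⟪f' (s • v + a) - f' a, v⟫ ≤ ‖f' (s • v + a) - f' a‖ * ‖v‖ := hcs
          _ ≤ L * (s * ‖v‖) * ‖v‖ := by
              apply mul_le_mul_of_nonneg_right hl hn
          _ = L * s * ‖v‖ ^ 2 := by ring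
      linarith
  have hkey := hanti (Set.mem_Icc.mpr ⟨le_refl 0, zero_le_one⟩)
    (Set.mem_Icc.mpr ⟨zero_le_one, le_refl 1⟩) zero_le_one
  have h0 : χ 0 = f a := by simp [hχ]
  have h1 : χ 1 = f b - ⟪f' a, v⟫ - L / 2 * ‖v‖ ^ 2 := by
    simp [hχ, hv]
  rw [h0, h1] at hkey
  linarith

lemma coco (hconv : ConvexOn ℝ Set.univ f) (hgrad : ∀ x, HasGradientAt f (f' x) x)
    (hlip : ∀ x y, ‖f' x - f' y‖ ≤ L * ‖x - y‖) (hL : 0 < L) (a b : F) :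
    f b + ⟪f' b, a - b⟫ + 1 / (2 * L) * ‖f' a - f' b‖ ^ 2 ≤ f a := by
  set w := f' a - f' b with hw
  set p := a - (1 / L) • w with hp
  have h1 : f b + ⟪f' b, p - b⟫ ≤ f p := grad_ineq hconv hgrad b p
  have h2 : f p ≤ f a + ⟪f' a, p - a⟫ + L / 2 * ‖p - a‖ ^ 2 := descent hgrad hlip hL a p
  have e1 : p - b = (a - b) - (1 / L) • w := by rw [hp]; abel
  have e2 : p - a = -((1 / L) • w) := by rw [hp]; abel
  have e3 : ⟪f' b, p - b⟫ = ⟪f' b, a - b⟫ - (1 / L) * ⟪f' b, w⟫ := by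
    rw [e1, inner_sub_right, real_inner_smul_right]
  have e4 : ⟪f' a, p - a⟫ = -((1 / L) * ⟪f' a, w⟫) := by
    rw [e2, inner_neg_right, real_inner_smul_right]
  have e5 : ‖p - a‖ ^ 2 = (1 / L) ^ 2 * ‖w‖ ^ 2 := by
    rw [e2, norm_neg, norm_smul, Real.norm_eq_abs, abs_of_pos (by positivity : (0:ℝ) < 1 / L),
      mul_pow]
  have e6 : ⟪f' a, w⟫ - ⟪f' b, w⟫ = ‖w‖ ^ 2 := by
    rw [← inner_sub_left, ← hw, real_inner_self_eq_norm_sq]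
  have e7 : (1 / L) * ⟪f' a, w⟫ - (1 / L) * ⟪f' b, w⟫ = (1 / L) * ‖w‖ ^ 2 := by
    rw [← mul_sub, e6]
  have e8 : L / 2 * ((1 / L) ^ 2 * ‖w‖ ^ 2) = 1 / (2 * L) * ‖w‖ ^ 2 := by
    field_simp
  have e9 : (1 / L) * ‖w‖ ^ 2 - 1 / (2 * L) * ‖w‖ ^ 2 = 1 / (2 * L) * ‖w‖ ^ 2 := by
    field_simp
    ring
  rw [e3] at h1
  rw [e4, e5] at h2
  -- combine
  have : f b + ⟪f' b, a - b⟫ - (1 / L) * ⟪f' b, w⟫ ≤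
      f a - (1 / L) * ⟪f' a, w⟫ + 1 / (2 * L) * ‖w‖ ^ 2 := by
    rw [← e8]; linarith
  linarith [this, e7, e9]

lemma grad_min_zero {xstar : F} (hgrad : ∀ x, HasGradientAt f (f' x) x)
    (hmin : ∀ z, f xstar ≤ f z) : f' xstar = 0 := by
  have hloc : IsLocalMin f xstar := Filter.Eventually.of_forall hmin
  have h0 := hloc.hasFDerivAt_eq_zero (hasGradientAt_iff_hasFDerivAt.mp (hgrad xstar))
  have : InnerProductSpace.toDual ℝ F (f' xstar) = InnerProductSpace.toDual ℝ F 0 := by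
    rw [h0, map_zero]
  exact (InnerProductSpace.toDual ℝ F).injective this

end helpers

private lemma step_scalar (t u εk εk1 A B C P Q W D : ℝ) (hu : 1 ≤ u) (hD : 0 ≤ D)
    (hsq : u ^ 2 = t ^ 2 + u)
    (h1 : εk1 - εk ≤ A - D * (P - 2 * C + Q))
    (h2 : εk1 ≤ B - D * Q)
    (hW : u * W = t ^ 2 * A + 2 * t ^ 2 * D * C + u * B) (hP : 0 ≤ P) :
    u ^ 2 * εk1 - u * W + u ^ 2 * D * Q ≤ t ^ 2 * εk := by
  have H1 : t ^ 2 * (εk1 - εk) ≤ t ^ 2 * (A - D * (P - 2 * C + Q)) :=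
    mul_le_mul_of_nonneg_left h1 (sq_nonneg t)
  have H2 : u * εk1 ≤ u * (B - D * Q) :=
    mul_le_mul_of_nonneg_left h2 (by linarith)
  have H3 : (0:ℝ) ≤ t ^ 2 * D * P := by positivity
  have hE : u ^ 2 * εk1 = t ^ 2 * εk1 + u * εk1 := by rw [hsq]; ring
  have hQ : u ^ 2 * D * Q = t ^ 2 * D * Q + u * D * Q := by rw [hsq]; ring
  nlinarith [H1, H2, H3, hE, hQ, hW]

/-- Convergence bound for the primary sequence `{x_i}` of Nesterov's fast gradient
method FGM1. -/
theorem stmt_15 (d : ℕ) (L : ℝ) (hL : 0 < L)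
    (f : EuclideanSpace ℝ (Fin d) → ℝ)
    (f' : EuclideanSpace ℝ (Fin d) → EuclideanSpace ℝ (Fin d))
    (hconv : ConvexOn ℝ Set.univ f)
    (hgrad : ∀ x, HasGradientAt f (f' x) x)
    (hlip : ∀ x y, ‖f' x - f' y‖ ≤ L * ‖x - y‖)
    (xstar : EuclideanSpace ℝ (Fin d)) (hmin : ∀ z, f xstar ≤ f z)
    (x y : ℕ → EuclideanSpace ℝ (Fin d))
    (hy0 : y 0 = x 0)
    (hyrec : ∀ i : ℕ, y (i + 1) = x i - (1 / L) • f' (x i))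
    (hxrec : ∀ i : ℕ, x (i + 1) =
      y (i + 1) + ((tseq i - 1) / tseq (i + 1)) • (y (i + 1) - y i)) :
    ∀ n : ℕ, 1 ≤ n →
      f (x n) - f xstar ≤ L * ‖x 0 - xstar‖ ^ 2 / (2 * (tseq n) ^ 2) ∧
      L * ‖x 0 - xstar‖ ^ 2 / (2 * (tseq n) ^ 2) ≤
        2 * L * ‖x 0 - xstar‖ ^ 2 / ((n : ℝ) + 2) ^ 2 := by
  have hstar : f' xstar = 0 := grad_min_zero hgrad hmin
  set g : ℕ → EuclideanSpace ℝ (Fin d) := fun i => f' (x i) with hg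
  set v : ℕ → EuclideanSpace ℝ (Fin d) :=
    fun k => tseq k • y (k + 1) - (tseq k - 1) • y k - xstar with hv
  have hL' : L ≠ 0 := ne_of_gt hL
  have hyrecg : ∀ i : ℕ, y (i + 1) = x i - (1 / L) • g i := hyrec
  have hxkg : ∀ k, x k = y (k + 1) + (1 / L) • g k := by
    intro k
    rw [hyrecg k]
    abel
  -- v recursion
  have hvrec : ∀ k, v (k + 1) = v k - (tseq (k + 1) / L) • g (k + 1) := by
    intro k
    have htp : tseq (k + 1) ≠ 0 := ne_of_gt (tseq_pos_s15 _)
    simp only [hv]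
    rw [hyrecg (k + 1), hxrec k]
    match_scalars <;> field_simp <;> ring
  -- key vector identity
  have hV : ∀ k, tseq (k + 1) • v k = tseq k ^ 2 • (x (k + 1) - x k) +
      (tseq k ^ 2 / L) • g k + tseq (k + 1) • (x (k + 1) - xstar) := by
    intro k
    have htp : tseq (k + 1) ≠ 0 := ne_of_gt (tseq_pos_s15 _)
    have hsq := tseq_sq k
    simp only [hv]
    rw [hxrec k, hxkg k]
    match_scalars
    · field_simp
      linear_combination (tseq k - 1) * hsq
    · field_simp
      linear_combination (1 - tseq k) * hsq
    · field_simp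
    · field_simp
      ring
  -- main Lyapunov induction
  have key : ∀ k, tseq k ^ 2 * (f (x k) - f xstar) + L / 2 * ‖v k‖ ^ 2 ≤
      L / 2 * ‖x 0 - xstar‖ ^ 2 := by
    intro k
    induction k with
    | zero =>
      have hB := coco hconv hgrad hlip hL xstar (x 0)
      rw [hstar] at hB
      have hB' : f (x 0) - f xstar ≤
          ⟪x 0 - xstar, g 0⟫ - 1 / (2 * L) * ‖g 0‖ ^ 2 := by
        have e1 : ⟪f' (x 0), xstar - x 0⟫ = -⟪x 0 - xstar, g 0⟫ := by
          rw [real_inner_comm]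
          rw [show xstar - x 0 = -(x 0 - xstar) by abel, inner_neg_left]
        have e2 : ‖(0:EuclideanSpace ℝ (Fin d)) - f' (x 0)‖ = ‖g 0‖ := by
          rw [zero_sub, norm_neg]
        rw [e1, e2] at hB
        linarith
      have hv0 : v 0 = (x 0 - xstar) - (1 / L) • g 0 := by
        simp only [hv]
        rw [hyrecg 0, hy0]
        show (1:ℝ) • (x 0 - (1 / L) • f' (x 0)) - ((1:ℝ) - 1) • x 0 - xstar = _
        simp
        abel
      have e1 : ‖v 0‖ ^ 2 = ‖x 0 - xstar‖ ^ 2 - 2 * (1 / L) * ⟪x 0 - xstar, g 0⟫ +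
          (1 / L) ^ 2 * ‖g 0‖ ^ 2 := by
        rw [hv0, norm_sub_sq_real, real_inner_smul_right, norm_smul, Real.norm_eq_abs,
          abs_of_pos (by positivity : (0:ℝ) < 1 / L), mul_pow]
        ring
      rw [e1]
      have e2 : L / 2 * (‖x 0 - xstar‖ ^ 2 - 2 * (1 / L) * ⟪x 0 - xstar, g 0⟫ +
          (1 / L) ^ 2 * ‖g 0‖ ^ 2) = L / 2 * ‖x 0 - xstar‖ ^ 2 - ⟪x 0 - xstar, g 0⟫ +
          1 / (2 * L) * ‖g 0‖ ^ 2 := by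
        field_simp
      rw [e2]
      have : tseq 0 = 1 := rfl
      rw [this]
      linarith
    | succ k ih =>
      have hu := tseq_ge_one_s15 (k + 1)
      have hsq := tseq_sq k
      -- inequality 1 : coco (x k) (x (k+1))
      have h1 := coco hconv hgrad hlip hL (x k) (x (k + 1))
      have h1' : f (x (k + 1)) - f xstar - (f (x k) - f xstar) ≤ ⟪x (k + 1) - x k, g (k + 1)⟫ -
          1 / (2 * L) * (‖g k‖ ^ 2 - 2 * ⟪g k, g (k + 1)⟫ + ‖g (k + 1)‖ ^ 2) := by
        have e1 : ⟪f' (x (k + 1)), x k - x (k + 1)⟫ = -⟪x (k + 1) - x k, g (k + 1)⟫ := by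
          rw [real_inner_comm]
          rw [show x k - x (k + 1) = -(x (k + 1) - x k) by abel, inner_neg_left]
        have e2 : ‖f' (x k) - f' (x (k + 1))‖ ^ 2 =
            ‖g k‖ ^ 2 - 2 * ⟪g k, g (k + 1)⟫ + ‖g (k + 1)‖ ^ 2 := by
          rw [norm_sub_sq_real]
        rw [e1, e2] at h1
        linarith
      -- inequality 2 : coco xstar (x (k+1))
      have h2 := coco hconv hgrad hlip hL xstar (x (k + 1))
      rw [hstar] at h2
      have h2' : f (x (k + 1)) - f xstar ≤ ⟪x (k + 1) - xstar, g (k + 1)⟫ -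
          1 / (2 * L) * ‖g (k + 1)‖ ^ 2 := by
        have e1 : ⟪f' (x (k + 1)), xstar - x (k + 1)⟫ =
            -⟪x (k + 1) - xstar, g (k + 1)⟫ := by
          rw [real_inner_comm]
          rw [show xstar - x (k + 1) = -(x (k + 1) - xstar) by abel, inner_neg_left]
        have e2 : ‖(0:EuclideanSpace ℝ (Fin d)) - f' (x (k + 1))‖ = ‖g (k + 1)‖ := by
          rw [zero_sub, norm_neg]
        rw [e1, e2] at h2
        linarith
      -- inner product identity from hV
      have hW : tseq (k + 1) * ⟪v k, g (k + 1)⟫ =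
          tseq k ^ 2 * ⟪x (k + 1) - x k, g (k + 1)⟫ +
          tseq k ^ 2 / L * ⟪g k, g (k + 1)⟫ +
          tseq (k + 1) * ⟪x (k + 1) - xstar, g (k + 1)⟫ := by
        have hc := congrArg (fun z => (⟪z, g (k + 1)⟫ : ℝ)) (hV k)
        simp only [inner_add_left, real_inner_smul_left] at hc
        exact hc
      -- norm expansion of v (k+1)
      have hnv : L / 2 * ‖v (k + 1)‖ ^ 2 = L / 2 * ‖v k‖ ^ 2 -
          tseq (k + 1) * ⟪v k, g (k + 1)⟫ +
          tseq (k + 1) ^ 2 * (1 / (2 * L)) * ‖g (k + 1)‖ ^ 2 := by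
        rw [hvrec k, norm_sub_sq_real, real_inner_smul_right, norm_smul, Real.norm_eq_abs,
          abs_of_pos (by positivity : (0:ℝ) < tseq (k + 1) / L), mul_pow]
        field_simp
      have hW' : tseq (k + 1) * ⟪v k, g (k + 1)⟫ =
          tseq k ^ 2 * ⟪x (k + 1) - x k, g (k + 1)⟫ +
          2 * tseq k ^ 2 * (1 / (2 * L)) * ⟪g k, g (k + 1)⟫ +
          tseq (k + 1) * ⟪x (k + 1) - xstar, g (k + 1)⟫ := by
        rw [hW]
        field_simp
      have hstep := step_scalar (tseq k) (tseq (k + 1)) (f (x k) - f xstar)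
        (f (x (k + 1)) - f xstar) (⟪x (k + 1) - x k, g (k + 1)⟫)
        (⟪x (k + 1) - xstar, g (k + 1)⟫) (⟪g k, g (k + 1)⟫) (‖g k‖ ^ 2)
        (‖g (k + 1)‖ ^ 2) (⟪v k, g (k + 1)⟫) (1 / (2 * L)) hu (by positivity) hsq
        h1' h2' hW' (sq_nonneg _)
      rw [hnv]
      linarith [hstep, ih]

  -- conclusion
  intro n _
  have htn := tseq_ge_one_s15 n
  have htnp : (0:ℝ) < tseq n := tseq_pos_s15 n
  constructor
  · have hk := key n
    have hvn : (0:ℝ) ≤ L / 2 * ‖v n‖ ^ 2 := by positivity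
    rw [le_div_iff₀ (by positivity : (0:ℝ) < 2 * tseq n ^ 2)]
    nlinarith [hk, hvn]
  · have hlb := tseq_lb n
    have hn2 : (0:ℝ) < ((n : ℝ) + 2) := by positivity
    have hsq2 : ((n : ℝ) + 2) ^ 2 / 2 ≤ 2 * tseq n ^ 2 := by
      have hm := mul_le_mul hlb hlb (by positivity) (tseq_pos_s15 n).le
      calc ((n : ℝ) + 2) ^ 2 / 2 = 2 * ((((n : ℝ) + 2) / 2) * (((n : ℝ) + 2) / 2)) := by ring
        _ ≤ 2 * (tseq n * tseq n) := by linarith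
        _ = 2 * tseq n ^ 2 := by ring
    have hnum : (0:ℝ) ≤ L * ‖x 0 - xstar‖ ^ 2 := mul_nonneg hL.le (sq_nonneg _)
    have h := div_le_div_of_nonneg_left hnum (by positivity : (0:ℝ) < ((n : ℝ) + 2) ^ 2 / 2)
      hsq2
    have e : L * ‖x 0 - xstar‖ ^ 2 / (((n : ℝ) + 2) ^ 2 / 2) =
        2 * L * ‖x 0 - xstar‖ ^ 2 / ((n : ℝ) + 2) ^ 2 := by
      rw [div_div_eq_mul_div]
      ring
    rw [e] at h
    exact h
end

section
/- Fix N ≥ 1 and let θ_{N-1} satisfy θ_{N-1} ≥ (N+1)/2, and θ_N = (1 + sqrt(1 + 8θ_{N-1}^2))/2. Then θ_N ≥ (N+1)/sqrt(2) + 1/2, and hence 1/(2θ_N^2) ≤ 1/((N+1)(N+1+sqrt(2))). -/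
/-- Quantitative bound on the final OGM parameter `θ_N`. -/
theorem stmt_19 (N : ℕ) (hN : 1 ≤ N) (θNm1 θN : ℝ)
    (h1 : θNm1 ≥ ((N : ℝ) + 1) / 2)
    (h2 : θN = (1 + Real.sqrt (1 + 8 * θNm1 ^ 2)) / 2) :
    θN ≥ ((N : ℝ) + 1) / Real.sqrt 2 + 1 / 2 ∧
    1 / (2 * θN ^ 2) ≤ 1 / (((N : ℝ) + 1) * ((N : ℝ) + 1 + Real.sqrt 2)) := by
  have hs2 : Real.sqrt 2 > 0 := by positivity
  have hs2sq : Real.sqrt 2 ^ 2 = 2 := Real.sq_sqrt (by norm_num)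
  have hNpos : (0:ℝ) < (N : ℝ) + 1 := by positivity
  have hθpos : (0:ℝ) < θNm1 := lt_of_lt_of_le (by positivity) h1
  -- sqrt(1+8θ²) ≥ √2 * (2θNm1) ≥ √2 (N+1)
  have key : Real.sqrt (1 + 8 * θNm1 ^ 2) ≥ Real.sqrt 2 * ((N:ℝ) + 1) := by
    have h8 : (8 : ℝ) * θNm1 ^ 2 = (Real.sqrt 2 * (2 * θNm1)) ^ 2 := by
      ring_nf; rw [hs2sq]; ring
    have : Real.sqrt (1 + 8 * θNm1 ^ 2) ≥ Real.sqrt (8 * θNm1 ^ 2) := by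
      apply Real.sqrt_le_sqrt; linarith
    have h2' : Real.sqrt (8 * θNm1 ^ 2) = Real.sqrt 2 * (2 * θNm1) := by
      rw [h8, Real.sqrt_sq (by positivity)]
    have : Real.sqrt (1 + 8 * θNm1 ^ 2) ≥ Real.sqrt 2 * (2 * θNm1) := by
      rw [← h2']; exact this
    nlinarith
  have hfirst : θN ≥ ((N : ℝ) + 1) / Real.sqrt 2 + 1 / 2 := by
    rw [h2, ge_iff_le, div_add' _ _ _ (ne_of_gt hs2), div_le_div_iff₀ hs2 (by norm_num)]
    nlinarith
  refine ⟨hfirst, ?_⟩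
  have ha : ((N:ℝ) + 1) / Real.sqrt 2 + 1/2 > 0 := by positivity
  have hθN : θN > 0 := lt_of_lt_of_le ha hfirst
  have hdiv : ((N:ℝ)+1) / Real.sqrt 2 = ((N:ℝ)+1) * Real.sqrt 2 / 2 := by
    rw [div_eq_div_iff (ne_of_gt hs2) (by norm_num : (2:ℝ) ≠ 0)]; nlinarith
  have h2θ : 2 * θN ^ 2 ≥ ((N : ℝ) + 1) * ((N : ℝ) + 1 + Real.sqrt 2) := by
    have h' : θN ≥ ((N:ℝ)+1) * Real.sqrt 2 / 2 + 1/2 := by rw [← hdiv]; exact hfirst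
    nlinarith [sq_nonneg (Real.sqrt 2), sq_nonneg ((N:ℝ)+1)]
  have hden : (0:ℝ) < ((N : ℝ) + 1) * ((N : ℝ) + 1 + Real.sqrt 2) := by positivity
  exact one_div_le_one_div_of_le hden h2θ
end
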